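/- Let R be a commutative unital ring and A an unbounded cochain complex of R-modules which is bounded above (A^n = 0 for all sufficiently large n) and such that A^n is a projective R-module for every n ∈ ℤ. Then A is cofibrant: the unique map 0 → A has the left lifting property with respect to every degreewise surjective quasi-isomorphism of cochain complexes of R-modules. -/

import Mathlib

open CategoryTheory Limits ZeroObject

noncomputable section

variable (R : Type) [CommRing R]

/-- The category of unbounded cochain complexes of `R`-modules. -/
abbrev Cx := CochainComplex (ModuleCat.{0} R) ℤ

/-- The underlying module of `D_R(n)` in degree `i`: it is (isomorphic to) `R` if
`i = n` or `i = n+1`, and the zero module otherwise. -/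
abbrev diskFun (n i : ℤ) : Type := PLift (i = n ∨ i = n + 1) → R

/-- The differential of the disk complex `D_R(n)`. -/
def diskD (n i j : ℤ) : (diskFun R n i) →ₗ[R] (diskFun R n j) where
  toFun f _ := if hij : i = n ∧ j = n + 1 then f ⟨Or.inl hij.1⟩ else 0
  map_add' f g := by
    funext h
    by_cases hij : i = n ∧ j = n + 1 <;> simp [hij]
  map_smul' r f := by
    funext h
    by_cases hij : i = n ∧ j = n + 1 <;> simp [hij]

lemma diskD_apply (n i j : ℤ) (f : diskFun R n i) (h : PLift (j = n ∨ j = n + 1)) :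
    diskD R n i j f h = if hij : i = n ∧ j = n + 1 then f ⟨Or.inl hij.1⟩ else 0 := rfl

/-- The disk complex `D_R(n)`, with `R` in degrees `n` and `n+1`, the identity as the only
non-trivial differential, and `0` elsewhere. -/
def disk (n : ℤ) : Cx R where
  X i := ModuleCat.of R (diskFun R n i)
  d i j := ModuleCat.ofHom (diskD R n i j)
  shape i j hij := by
    apply ModuleCat.hom_ext
    apply LinearMap.ext
    intro f
    funext h
    have hn : ¬ (i = n ∧ j = n + 1) := by
      rintro ⟨rfl, rfl⟩
      exact hij rfl
    show diskD R n i j f h = _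
    rw [diskD_apply, dif_neg hn]
    rfl
  d_comp_d' i j k _ _ := by
    apply ModuleCat.hom_ext
    apply LinearMap.ext
    intro f
    funext h
    show diskD R n j k (diskD R n i j f) h = _
    rw [diskD_apply]
    split_ifs with hjk
    · rw [diskD_apply]
      have hn : ¬ (i = n ∧ j = n + 1) := by
        obtain ⟨h1, h2⟩ := hjk
        rintro ⟨rfl, h3⟩
        omega
      rw [dif_neg hn]
      rfl
    · rfl

/-- The underlying module of `S_R(n)` in degree `i`. -/
abbrev sphereFun (n i : ℤ) : Type := PLift (i = n) → R

/-- The sphere complex `S_R(n)`, with `R` in degree `n` and `0` elsewhere. -/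
def sphere (n : ℤ) : Cx R where
  X i := ModuleCat.of R (sphereFun R n i)
  d _ _ := 0
  shape _ _ _ := rfl
  d_comp_d' := by intros; simp

/-- The degreewise component of the map `S_R(n+1) ⟶ D_R(n)`. -/
def sphereToDiskHom (n i : ℤ) : (sphereFun R (n + 1) i) →ₗ[R] (diskFun R n i) where
  toFun g _ := if hi : i = n + 1 then g ⟨hi⟩ else 0
  map_add' g₁ g₂ := by
    funext h
    by_cases hi : i = n + 1 <;> simp [hi]
  map_smul' r g := by
    funext h
    by_cases hi : i = n + 1 <;> simp [hi]

lemma sphereToDiskHom_apply (n i : ℤ) (g : sphereFun R (n + 1) i)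
    (h : PLift (i = n ∨ i = n + 1)) :
    sphereToDiskHom R n i g h = if hi : i = n + 1 then g ⟨hi⟩ else 0 := rfl

/-- The map `S_R(n+1) ⟶ D_R(n)` which is the identity of `R` in degree `n+1`. -/
def sphereToDisk (n : ℤ) : sphere R (n + 1) ⟶ disk R n where
  f i := ModuleCat.ofHom (sphereToDiskHom R n i)
  comm' i j _ := by
    apply ModuleCat.hom_ext
    apply LinearMap.ext
    intro g
    funext h
    show diskD R n i j (sphereToDiskHom R n i g) h = sphereToDiskHom R n j ((0 : _ →ₗ[R] _) g) h
    simp only [LinearMap.zero_apply, map_zero, Pi.zero_apply]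
    rw [diskD_apply]
    split_ifs with hij
    · change (if hi : i = n + 1 then g ⟨hi⟩ else 0) = 0
      have hn : ¬ i = n + 1 := by
        obtain ⟨h1, h2⟩ := hij
        omega
      rw [dif_neg hn]
    · rfl

/-- A map of cochain complexes is degreewise surjective if it is surjective in each degree. -/
def DegSurj {M N : Cx R} (p : M ⟶ N) : Prop := ∀ n : ℤ, Function.Surjective (p.f n)



/-- `f` is a retract of `g` in the arrow category: there are morphisms of arrows
`f → g → f` composing to the identity of `f`. -/
def IsRetractOf {C : Type 1} [Category.{0} C] {X Y X' Y' : C} (f : X ⟶ Y) (g : X' ⟶ Y') : Prop :=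
  ∃ (i : Arrow.mk f ⟶ Arrow.mk g) (r : Arrow.mk g ⟶ Arrow.mk f), i ≫ r = 𝟙 (Arrow.mk f)

/-- The generating trivial cofibration `0 ⟶ D_R(n)`. -/
def zeroToDisk (n : ℤ) : (0 : Cx R) ⟶ disk R n := 0

/-- A cochain complex `A` is cofibrant if `0 ⟶ A` has the left lifting property with respect
to every degreewise surjective quasi-isomorphism. -/
def Cofibrant (A : Cx R) : Prop :=
  ∀ {X Y : Cx R} (p : X ⟶ Y), (∀ n : ℤ, Function.Surjective (p.f n)) → QuasiIso p →
    HasLiftingProperty (0 : (0 : Cx R) ⟶ A) p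

/-- A morphism of cochain complexes is a cofibration (for the projective model structure) if it
has the left lifting property with respect to every degreewise surjective quasi-isomorphism. -/
def Cofib {M N : Cx R} (i : M ⟶ N) : Prop :=
  ∀ {X Y : Cx R} (p : X ⟶ Y), (∀ n : ℤ, Function.Surjective (p.f n)) → QuasiIso p →
    HasLiftingProperty i p

namespace SCAux

variable {R : Type} [CommRing R] (S : CategoryTheory.ShortComplex (ModuleCat.{0} R))

/-- homology class of a cycle -/
def κ (z : S.X₂) (hz : S.g z = 0) : S.homology :=
  S.homologyπ (S.moduleCatCyclesIso.inv ⟨z, hz⟩)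

lemma κ_surj (h : S.homology) : ∃ z hz, κ S z hz = h := by
  obtain ⟨w, rfl⟩ := (ModuleCat.epi_iff_surjective S.homologyπ).1 inferInstance h
  refine ⟨(S.moduleCatCyclesIso.hom w).1, (S.moduleCatCyclesIso.hom w).2, ?_⟩
  unfold κ
  congr 1
  exact S.moduleCatCyclesIso.hom_inv_id_apply w

lemma κ_eq (z : S.X₂) (hz : S.g z = 0) :
    κ S z hz = S.moduleCatHomologyIso.inv (S.moduleCatLeftHomologyData.π ⟨z, hz⟩) := by
  unfold κ
  erw [CategoryTheory.ShortComplex.moduleCatCyclesIso_inv_π_apply]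

lemma κ_eq_iff (z₁ z₂ : S.X₂) (h₁ : S.g z₁ = 0) (h₂ : S.g z₂ = 0) :
    κ S z₁ h₁ = κ S z₂ h₂ ↔ ∃ y : S.X₁, S.f y = z₁ - z₂ := by
  rw [κ_eq, κ_eq]
  have hinj := (ModuleCat.mono_iff_injective S.moduleCatHomologyIso.inv).1 inferInstance
  constructor
  · intro hh
    have h2 := hinj hh
    have h3 : (Submodule.Quotient.mk (⟨z₁, h₁⟩ : LinearMap.ker S.g.hom) :
        _ ⧸ LinearMap.range S.moduleCatToCycles) = Submodule.Quotient.mk ⟨z₂, h₂⟩ := h2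
    rw [Submodule.Quotient.eq] at h3
    obtain ⟨y, hy⟩ := h3
    exact ⟨y, congrArg Subtype.val hy⟩
  · rintro ⟨y, hy⟩
    congr 1
    show (Submodule.Quotient.mk (⟨z₁, h₁⟩ : LinearMap.ker S.g.hom) :
        _ ⧸ LinearMap.range S.moduleCatToCycles) = Submodule.Quotient.mk ⟨z₂, h₂⟩
    rw [Submodule.Quotient.eq]
    exact ⟨y, Subtype.ext hy⟩

lemma κ_zero (hz : S.g 0 = 0) : κ S 0 hz = 0 := by
  unfold κ
  have : (⟨(0 : S.X₂), hz⟩ : S.moduleCatLeftHomologyData.K) = 0 := rfl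
  rw [this]
  show S.homologyπ (S.moduleCatCyclesIso.inv 0) = 0
  rw [map_zero, map_zero]

variable {S} {S₂ : CategoryTheory.ShortComplex (ModuleCat.{0} R)} (φ : S ⟶ S₂)

lemma κ_naturality (z : S.X₂) (hz : S.g z = 0)
    (hz' : S₂.g (φ.τ₂ z) = 0) :
    CategoryTheory.ShortComplex.homologyMap φ (κ S z hz) = κ S₂ (φ.τ₂ z) hz' := by
  unfold κ
  have h1 : CategoryTheory.ShortComplex.homologyMap φ (S.homologyπ (S.moduleCatCyclesIso.inv ⟨z, hz⟩))
      = S₂.homologyπ (CategoryTheory.ShortComplex.cyclesMap φ (S.moduleCatCyclesIso.inv ⟨z, hz⟩)) :=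
    ConcreteCategory.congr_hom (CategoryTheory.ShortComplex.homologyπ_naturality φ)
      (S.moduleCatCyclesIso.inv ⟨z, hz⟩)
  rw [h1]
  congr 1
  have hmono := (ModuleCat.mono_iff_injective S₂.iCycles).1 inferInstance
  apply hmono
  have h2 : S₂.iCycles (CategoryTheory.ShortComplex.cyclesMap φ (S.moduleCatCyclesIso.inv ⟨z, hz⟩))
      = φ.τ₂ (S.iCycles (S.moduleCatCyclesIso.inv ⟨z, hz⟩)) :=
    ConcreteCategory.congr_hom (CategoryTheory.ShortComplex.cyclesMap_i φ)
      (S.moduleCatCyclesIso.inv ⟨z, hz⟩)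
  have h3 : S.iCycles (S.moduleCatCyclesIso.inv ⟨z, hz⟩) = z :=
    ConcreteCategory.congr_hom (CategoryTheory.ShortComplex.moduleCatCyclesIso_inv_iCycles S) ⟨z, hz⟩
  have h4 : S₂.iCycles (S₂.moduleCatCyclesIso.inv ⟨φ.τ₂ z, hz'⟩) = φ.τ₂ z :=
    ConcreteCategory.congr_hom (CategoryTheory.ShortComplex.moduleCatCyclesIso_inv_iCycles S₂) ⟨φ.τ₂ z, hz'⟩
  rw [h2, h3, h4]

/-- concrete surjectivity on homology -/
lemma quasiIso_surj [CategoryTheory.ShortComplex.QuasiIso φ] (c : S₂.X₂) (hc : S₂.g c = 0) :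
    ∃ z : S.X₂, S.g z = 0 ∧ ∃ y : S₂.X₁, S₂.f y = φ.τ₂ z - c := by
  have hiso : IsIso (CategoryTheory.ShortComplex.homologyMap φ) :=
    (CategoryTheory.ShortComplex.quasiIso_iff φ).1 inferInstance
  have hsurj := (ModuleCat.epi_iff_surjective (CategoryTheory.ShortComplex.homologyMap φ)).1
    inferInstance
  obtain ⟨h₁, hh₁⟩ := hsurj (κ S₂ c hc)
  obtain ⟨z, hz, rfl⟩ := κ_surj S h₁
  have hz' : S₂.g (φ.τ₂ z) = 0 := by
    have h5 : S₂.g (φ.τ₂ z) = φ.τ₃ (S.g z) := ConcreteCategory.congr_hom φ.comm₂₃ z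
    rw [h5, hz, map_zero]
  rw [κ_naturality φ z hz hz'] at hh₁
  rw [κ_eq_iff] at hh₁
  exact ⟨z, hz, hh₁⟩

lemma quasiIso_inj [CategoryTheory.ShortComplex.QuasiIso φ] (z : S.X₂) (hz : S.g z = 0)
    (y : S₂.X₁) (hy : S₂.f y = φ.τ₂ z) : ∃ x : S.X₁, S.f x = z := by
  have hiso : IsIso (CategoryTheory.ShortComplex.homologyMap φ) :=
    (CategoryTheory.ShortComplex.quasiIso_iff φ).1 inferInstance
  have hinj := (ModuleCat.mono_iff_injective (CategoryTheory.ShortComplex.homologyMap φ)).1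
    inferInstance
  have hz' : S₂.g (φ.τ₂ z) = 0 := by
    have h5 : S₂.g (φ.τ₂ z) = φ.τ₃ (S.g z) := ConcreteCategory.congr_hom φ.comm₂₃ z
    rw [h5, hz, map_zero]
  have h6 : κ S₂ (φ.τ₂ z) hz' = κ S₂ 0 (map_zero _) :=
    (κ_eq_iff S₂ _ _ _ _).2 ⟨y, by rw [hy, sub_zero]⟩
  have h7 : CategoryTheory.ShortComplex.homologyMap φ (κ S z hz) =
      CategoryTheory.ShortComplex.homologyMap φ (κ S 0 (map_zero _)) := by
    rw [κ_naturality φ z hz hz',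
      κ_naturality φ 0 (map_zero (ConcreteCategory.hom S.g)) (by rw [map_zero, map_zero])]
    exact (κ_eq_iff S₂ _ _ _ _).2 ⟨y, by rw [map_zero (ConcreteCategory.hom φ.τ₂), sub_zero, hy]⟩
  have h8 := hinj h7
  rw [κ_eq_iff] at h8
  obtain ⟨x, hx⟩ := h8
  exact ⟨x, by rw [hx, sub_zero]⟩

end SCAux

namespace CxAux

variable {R : Type} [CommRing R] {X Y : Cx R} (p : X ⟶ Y)

/-- the morphism of short complexes induced by `p` around degree `j` -/
def φ' (i j k : ℤ) : X.sc' i j k ⟶ Y.sc' i j k :=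
  (HomologicalComplex.shortComplexFunctor' (ModuleCat.{0} R) (ComplexShape.up ℤ) i j k).map p

lemma φ'_quasiIso [QuasiIso p] (i j k : ℤ) (hi : i + 1 = j) (hk : j + 1 = k) :
    CategoryTheory.ShortComplex.QuasiIso (φ' p i j k) :=
  (quasiIsoAt_iff' p i j k ((ComplexShape.up ℤ).prev_eq' (by simpa using hi))
    ((ComplexShape.up ℤ).next_eq' (by simpa using hk))).1 inferInstance

lemma chase (hp : ∀ n, Function.Surjective (p.f n)) [QuasiIso p] (n : ℤ) (z : X.X (n + 1))
    (hz1 : p.f (n + 1) z = 0) (hz2 : X.d (n + 1) (n + 1 + 1) z = 0) :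
    ∃ w : X.X n, p.f n w = 0 ∧ X.d n (n + 1) w = z := by
  have q1 := φ'_quasiIso p n (n + 1) (n + 1 + 1) rfl rfl
  have q2 := φ'_quasiIso p (n - 1) n (n + 1) (by ring) rfl
  -- step 1 : find x with d x = z
  obtain ⟨x, hx⟩ := SCAux.quasiIso_inj (φ' p n (n + 1) (n + 1 + 1)) z hz2 0
    (by show Y.d n (n+1) 0 = p.f (n+1) z; rw [map_zero, hz1])
  have hx : X.d n (n + 1) x = z := hx
  -- step 2 : find cycle x' with p x' - p x a boundary
  have hc : Y.d n (n + 1) (p.f n x) = 0 := by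
    have h1 : Y.d n (n+1) (p.f n x) = p.f (n+1) (X.d n (n+1) x) :=
      ConcreteCategory.congr_hom (p.comm n (n+1)) x
    rw [h1, hx, hz1]
  obtain ⟨x', hx'c, y, hy⟩ := SCAux.quasiIso_surj (φ' p (n - 1) n (n + 1)) (p.f n x) hc
  have hx'c : X.d n (n + 1) x' = 0 := hx'c
  have hy : Y.d (n - 1) n y = p.f n x' - p.f n x := hy
  obtain ⟨u, hu⟩ := hp (n - 1) y
  refine ⟨(show X.X n from x) - (show X.X n from x') + X.d (n - 1) n u, ?_, ?_⟩
  · have h2 : p.f n (X.d (n - 1) n u) = Y.d (n - 1) n (p.f (n - 1) u) :=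
      (ConcreteCategory.congr_hom (p.comm (n - 1) n) u).symm
    rw [map_add, map_sub, h2, hu, hy]
    abel
  · have h3 : X.d n (n + 1) (X.d (n - 1) n u) = 0 :=
      ConcreteCategory.congr_hom (X.d_comp_d (n - 1) n (n + 1)) u
    rw [map_add, map_sub, h3, hx, hx'c]
    abel

variable {A : Cx R} (v : A ⟶ Y)

lemma step (hp : ∀ n, Function.Surjective (p.f n)) [QuasiIso p] (n : ℤ)
    (hproj : Module.Projective R (A.X n))
    (g' : A.X (n + 1) ⟶ X.X (n + 1)) (g'' : A.X (n + 1 + 1) ⟶ X.X (n + 1 + 1))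
    (h1 : g' ≫ p.f (n + 1) = v.f (n + 1))
    (h2 : g' ≫ X.d (n + 1) (n + 1 + 1) = A.d (n + 1) (n + 1 + 1) ≫ g'') :
    ∃ g : A.X n ⟶ X.X n, g ≫ p.f n = v.f n ∧ g ≫ X.d n (n + 1) = A.d n (n + 1) ≫ g' := by
  haveI := hproj
  obtain ⟨g₀, hg₀⟩ := Module.projective_lifting_property (p.f n).hom (v.f n).hom (hp n)
  set e : A.X n →ₗ[R] X.X (n + 1) :=
    (X.d n (n + 1)).hom ∘ₗ g₀
      - g'.hom ∘ₗ (A.d n (n + 1)).hom with he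
  have he1 : ∀ a : A.X n, p.f (n + 1) (e a) = 0 := by
    intro a
    have c1 : Y.d n (n + 1) (p.f n (g₀ a)) = p.f (n + 1) (X.d n (n + 1) (g₀ a)) :=
      ConcreteCategory.congr_hom (p.comm n (n + 1)) (g₀ a)
    have c2 : p.f n (g₀ a) = v.f n a := DFunLike.congr_fun hg₀ a
    have c3 : p.f (n + 1) (g' (A.d n (n + 1) a)) = v.f (n + 1) (A.d n (n + 1) a) :=
      ConcreteCategory.congr_hom h1 (A.d n (n + 1) a)
    have c4 : Y.d n (n + 1) (v.f n a) = v.f (n + 1) (A.d n (n + 1) a) :=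
      ConcreteCategory.congr_hom (v.comm n (n + 1)) a
    have : e a = X.d n (n + 1) (g₀ a) - g' (A.d n (n + 1) a) := rfl
    rw [this, map_sub, ← c1, c2, c3, c4, sub_self]
  have he2 : ∀ a : A.X n, X.d (n + 1) (n + 1 + 1) (e a) = 0 := by
    intro a
    have c1 : X.d (n + 1) (n + 1 + 1) (X.d n (n + 1) (g₀ a)) = 0 :=
      ConcreteCategory.congr_hom (X.d_comp_d n (n + 1) (n + 1 + 1)) (g₀ a)
    have c2 : X.d (n + 1) (n + 1 + 1) (g' (A.d n (n + 1) a)) =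
        g'' (A.d (n + 1) (n + 1 + 1) (A.d n (n + 1) a)) :=
      ConcreteCategory.congr_hom h2 (A.d n (n + 1) a)
    have c3 : A.d (n + 1) (n + 1 + 1) (A.d n (n + 1) a) = 0 :=
      ConcreteCategory.congr_hom (A.d_comp_d n (n + 1) (n + 1 + 1)) a
    have : e a = X.d n (n + 1) (g₀ a) - g' (A.d n (n + 1) a) := rfl
    rw [this, map_sub, c1, c2, c3, map_zero, sub_self]
  -- the submodule of cycles in the kernel complex
  set Z : Submodule R (X.X (n + 1)) :=
    LinearMap.ker (p.f (n + 1)).hom ⊓ LinearMap.ker (X.d (n + 1) (n + 1 + 1)).hom with hZ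
  set K : Submodule R (X.X n) := LinearMap.ker (p.f n).hom with hK
  have hDmem : ∀ w : K, X.d n (n + 1) (w : X.X n) ∈ Z := by
    rintro ⟨w, hw⟩
    constructor
    · show p.f (n + 1) (X.d n (n + 1) w) = 0
      have c : p.f (n + 1) (X.d n (n + 1) w) = Y.d n (n + 1) (p.f n w) :=
        (ConcreteCategory.congr_hom (p.comm n (n + 1)) w).symm
      have c' : p.f n w = 0 := hw
      rw [c, c', map_zero]
    · exact ConcreteCategory.congr_hom (X.d_comp_d n (n + 1) (n + 1 + 1)) w
  set D : K →ₗ[R] Z :=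
    LinearMap.codRestrict Z ((X.d n (n + 1)).hom ∘ₗ K.subtype) hDmem
    with hD
  have hDsurj : Function.Surjective D := by
    rintro ⟨z, hz1, hz2⟩
    obtain ⟨w, hw1, hw2⟩ := chase p hp n z hz1 hz2
    exact ⟨⟨w, hw1⟩, Subtype.ext hw2⟩
  set e' : A.X n →ₗ[R] Z := LinearMap.codRestrict Z e (fun a => ⟨he1 a, he2 a⟩) with he'
  obtain ⟨h', hh'⟩ := Module.projective_lifting_property D e' hDsurj
  refine ⟨ModuleCat.ofHom (g₀ - K.subtype ∘ₗ h'), ?_, ?_⟩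
  · apply ModuleCat.hom_ext
    apply LinearMap.ext
    intro a
    show p.f n (g₀ a - (h' a : X.X n)) = v.f n a
    rw [map_sub]
    have m1 : p.f n ((h' a : X.X n)) = 0 := (h' a).2
    rw [m1, sub_zero]
    exact DFunLike.congr_fun hg₀ a
  · apply ModuleCat.hom_ext
    apply LinearMap.ext
    intro a
    show X.d n (n + 1) (g₀ a - (h' a : X.X n)) = g' (A.d n (n + 1) a)
    rw [map_sub]
    have m2 : X.d n (n + 1) ((h' a : X.X n)) = e a := by
      have := DFunLike.congr_fun hh' a
      have h3 : (D (h' a) : X.X (n + 1)) = (e' a : X.X (n + 1)) := congrArg Subtype.val this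
      exact h3
    rw [m2, he]
    show _ - (X.d n (n + 1) (g₀ a) - g' (A.d n (n + 1) a)) = _
    abel

/-- `g` is a partial lift above degree `n`. -/
def Good (g : ∀ m : ℤ, A.X m ⟶ X.X m) (n : ℤ) : Prop :=
  ∀ m : ℤ, n ≤ m →
    g m ≫ p.f m = v.f m ∧ g m ≫ X.d m (m + 1) = A.d m (m + 1) ≫ g (m + 1)

lemma good_zero (n₀ : ℤ) (hbd : ∀ n, n₀ ≤ n → IsZero (A.X n)) :
    Good p v (fun _ => 0) n₀ :=
  fun m hm => ⟨(hbd m hm).eq_of_src _ _, (hbd m hm).eq_of_src _ _⟩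

lemma good_mono {g : ∀ m : ℤ, A.X m ⟶ X.X m} {n n' : ℤ} (h : Good p v g n) (hle : n ≤ n') :
    Good p v g n' := fun m hm => h m (le_trans hle hm)

lemma good_step (hp : ∀ n, Function.Surjective (p.f n)) [QuasiIso p]
    (hproj : ∀ n : ℤ, Module.Projective R (A.X n))
    {g : ∀ m : ℤ, A.X m ⟶ X.X m} {n : ℤ} (hg : Good p v g n) :
    ∃ g' : ∀ m : ℤ, A.X m ⟶ X.X m,
      Good p v g' (n - 1) ∧ ∀ m, n ≤ m → g' m = g m := by
  obtain ⟨gn, hgn1, hgn2⟩ := step p v hp (n - 1) (hproj (n - 1)) (g (n - 1 + 1))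
    (g (n - 1 + 1 + 1)) (hg (n - 1 + 1) (by omega)).1 (hg (n - 1 + 1) (by omega)).2
  refine ⟨Function.update g (n - 1) gn, ?_, fun m hm => Function.update_of_ne (by omega) _ _⟩
  intro m hm
  by_cases hmn : m = n - 1
  · subst hmn
    rw [Function.update_self, Function.update_of_ne (by omega)]
    exact ⟨hgn1, hgn2⟩
  · rw [Function.update_of_ne hmn, Function.update_of_ne (by omega)]
    exact hg m (by omega)

variable (n₀ : ℤ)

/-- The recursively constructed sequence of partial lifts. -/
noncomputable def seq (hp : ∀ n, Function.Surjective (p.f n)) [QuasiIso p]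
    (hproj : ∀ n : ℤ, Module.Projective R (A.X n))
    (hbd : ∀ n, n₀ ≤ n → IsZero (A.X n)) :
    (k : ℕ) → {g : ∀ m : ℤ, A.X m ⟶ X.X m // Good p v g (n₀ - k)}
  | 0 => ⟨fun _ => 0, good_mono p v (good_zero p v n₀ hbd) (by omega)⟩
  | (k + 1) =>
      ⟨(good_step p v hp hproj (seq hp hproj hbd k).2).choose,
        good_mono p v (good_step p v hp hproj (seq hp hproj hbd k).2).choose_spec.1
          (by push_cast; omega)⟩

lemma seq_agree (hp : ∀ n, Function.Surjective (p.f n)) [QuasiIso p]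
    (hproj : ∀ n : ℤ, Module.Projective R (A.X n))
    (hbd : ∀ n, n₀ ≤ n → IsZero (A.X n)) (k : ℕ) (m : ℤ) (hm : n₀ - k ≤ m) :
    (seq p v n₀ hp hproj hbd (k + 1)).1 m = (seq p v n₀ hp hproj hbd k).1 m := by
  show (good_step p v hp hproj (seq p v n₀ hp hproj hbd k).2).choose m = _
  exact (good_step p v hp hproj (seq p v n₀ hp hproj hbd k).2).choose_spec.2 m hm

lemma seq_agree' (hp : ∀ n, Function.Surjective (p.f n)) [QuasiIso p]
    (hproj : ∀ n : ℤ, Module.Projective R (A.X n))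
    (hbd : ∀ n, n₀ ≤ n → IsZero (A.X n)) (k k' : ℕ) (hk : k ≤ k') (m : ℤ)
    (hm : n₀ - k ≤ m) :
    (seq p v n₀ hp hproj hbd k').1 m = (seq p v n₀ hp hproj hbd k).1 m := by
  induction k' with
  | zero => rw [Nat.le_zero.1 hk]
  | succ k'' ih =>
    rcases Nat.lt_or_ge k (k'' + 1) with h | h
    · have hk'' : k ≤ k'' := by omega
      rw [seq_agree p v n₀ hp hproj hbd k'' m (by omega)]
      exact ih hk''
    · have : k = k'' + 1 := by omega
      rw [this]

lemma exists_lift (hp : ∀ n, Function.Surjective (p.f n)) [QuasiIso p]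
    (hproj : ∀ n : ℤ, Module.Projective R (A.X n))
    (hbd : ∀ n, n₀ ≤ n → IsZero (A.X n)) :
    ∃ l : A ⟶ X, l ≫ p = v := by
  set G := seq p v n₀ hp hproj hbd with hG
  have hkey : ∀ m : ℤ, n₀ - ((n₀ - m).toNat : ℤ) ≤ m := by intro m; omega
  refine ⟨{ f := fun m => (G ((n₀ - m).toNat)).1 m, comm' := ?_ }, ?_⟩
  · intro i j hij
    have hij' : i + 1 = j := hij
    subst hij'
    have h1 := ((G ((n₀ - i).toNat)).2 i (hkey i)).2
    have h2 : (G ((n₀ - (i + 1)).toNat)).1 (i + 1) = (G ((n₀ - i).toNat)).1 (i + 1) :=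
      (seq_agree' p v n₀ hp hproj hbd ((n₀ - (i + 1)).toNat) ((n₀ - i).toNat)
        (by omega) (i + 1) (by omega)).symm
    rw [h2]
    exact h1
  · apply HomologicalComplex.hom_ext
    intro m
    rw [HomologicalComplex.comp_f]
    exact ((G ((n₀ - m).toNat)).2 m (hkey m)).1

end CxAux

theorem statement_4 (A : Cx R) (hbd : ∃ n₀ : ℤ, ∀ n : ℤ, n₀ ≤ n → IsZero (A.X n))
    (hproj : ∀ n : ℤ, Module.Projective R (A.X n)) : Cofibrant R A := by
  intro X Y p hp hq
  haveI := hq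
  obtain ⟨n₀, hbd'⟩ := hbd
  constructor
  intro u w sq
  obtain ⟨l, hl⟩ := CxAux.exists_lift p w n₀ hp hproj hbd'
  exact ⟨⟨⟨l, (Limits.isZero_zero (Cx R)).eq_of_src _ _, hl⟩⟩⟩

end
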